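/- Let G be a finite group acting on a finite abelian group A, and suppose there exists a central element σ ∈ Z(G) such that the fixed subgroup A^σ = {a ∈ A : σ·a = a} is trivial. Then every extension of G by A realizing this action splits; equivalently, the second group cohomology H²(G, A) vanishes. -/

import Mathlib

/-- Let `G` be a finite group acting on a finite abelian group `A` (a
representation `A : Rep ℤ G`), and suppose there is a central element `σ ∈ Z(G)` whose fixed
subgroup `A^σ` is trivial.  Then the second group cohomology `H²(G, A)` vanishes (equivalently,
every extension of `G` by `A` realizing this action splits). -/
theorem h2_vanishes_of_central_fixed_point_free (G : Type) [Group G] [Finite G]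
    (A : Rep ℤ G) [Finite A] (σ : G) (hσ : σ ∈ Subgroup.center G)
    (hfix : ∀ a : A, A.ρ σ a = a → a = 0) :
    Subsingleton (groupCohomology A 2) := by
  -- the map `ρσ - 1` as a plain function
  set L : A → A := fun a => A.ρ σ a - a with hL
  have hLinj : Function.Injective L := by
    intro a b hab
    simp only [hL] at hab
    have h1 : A.ρ σ a - A.ρ σ b = a - b := sub_eq_sub_iff_sub_eq_sub.1 hab
    rw [← map_sub] at h1
    exact sub_eq_zero.1 (hfix _ h1)
  have hLbij : Function.Bijective L := Finite.injective_iff_bijective.1 hLinj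
  -- `L` commutes with the `G`-action since `σ` is central
  have hcomm : ∀ (g : G) (a : A), L (A.ρ g a) = A.ρ g (L a) := by
    intro g a
    have hmul : ∀ (x y : G) (a : A), A.ρ (x * y) a = A.ρ x (A.ρ y a) := fun x y a =>
      DFunLike.congr_fun (map_mul A.ρ x y) a
    have h1 : A.ρ σ (A.ρ g a) = A.ρ g (A.ρ σ a) := by
      rw [← hmul, ← hmul, Subgroup.mem_center_iff.1 hσ g]
    simp only [hL, h1, map_sub]
  -- inverse of L, also `G`-equivariant
  let τ : A ≃ A := Equiv.ofBijective L hLbij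
  have happ : ∀ a : A, L (τ.symm a) = a := fun a => τ.apply_symm_apply a
  have hτcomm : ∀ (g : G) (a : A), τ.symm (A.ρ g a) = A.ρ g (τ.symm a) := by
    intro g a
    apply hLinj
    rw [happ, hcomm, happ]
  -- every 2-cocycle is a coboundary
  have key : ∀ f : groupCohomology.cocycles₂ A, ⇑f ∈ groupCohomology.coboundaries₂ A := by
    intro f
    suffices hex : ∃ x : G → A, ∀ g h : G, A.ρ g (x h) - x (g * h) + x g = f (g, h) from
      let ⟨x, hx⟩ := hex; ⟨x, funext fun p => hx p.1 p.2⟩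
    have hc := (groupCohomology.mem_cocycles₂_iff (f : G × G → A)).1 f.2
    refine ⟨fun g => τ.symm (f (σ, g) - f (g, σ)), fun g h => ?_⟩
    apply hLinj
    have hgh : ∀ g : G, σ * g = g * σ := fun g => (Subgroup.mem_center_iff.1 hσ g).symm
    -- compute L applied to the candidate coboundary
    have expand : L (A.ρ g (τ.symm (f (σ, h) - f (h, σ)))
        - τ.symm (f (σ, g * h) - f (g * h, σ)) + τ.symm (f (σ, g) - f (g, σ)))
        = A.ρ g (f (σ, h) - f (h, σ)) - (f (σ, g * h) - f (g * h, σ))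
          + (f (σ, g) - f (g, σ)) := by
      have l1 : ∀ x y z : A, L (x - y + z) = L x - L y + L z := by
        intro x y z; simp only [hL, map_sub, map_add]; abel
      rw [l1, hcomm, happ, happ, happ]
    rw [expand]
    -- the cocycle identity instances
    have e1 := hc σ g h
    have e2 := hc g σ h
    have e3 := hc g h σ
    rw [hgh g] at e1
    rw [← hgh h] at e3
    have comb : (f (g * σ, h) + f (σ, g) + (f (g * h, σ) + f (g, h)))
        - (f (g * σ, h) + f (g, σ))
        = (A.ρ σ (f (g, h)) + f (σ, g * h) + (A.ρ g (f (h, σ)) + f (g, σ * h)))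
          - (A.ρ g (f (σ, h)) + f (g, σ * h)) := by rw [e1, e2, e3]
    simp only [hL, map_sub]
    rw [← sub_eq_zero] at comb ⊢
    abel_nf at comb ⊢
    exact comb
  have hzero : ∀ x : groupCohomology.H2 A, x = 0 := fun x =>
    groupCohomology.H2_induction_on x fun y => (groupCohomology.H2π_eq_zero_iff y).2 (key y)
  exact ⟨fun a b => by rw [hzero a, hzero b]⟩
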